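/- Let d ≥ 1, let f be continuously differentiable on a neighborhood of [0,1]^d with L-Lipschitz-continuous gradient on [0,1]^d, and define the projected gradient g : [0,1]^d → ℝ^d by g_i(x) = min{0, [∇f(x)]_i} if x_i = 0, g_i(x) = [∇f(x)]_i if 0 < x_i < 1, and g_i(x) = max{0, [∇f(x)]_i} if x_i = 1. Let x, y ∈ [0,1]^d be such that for every coordinate i: x_i = 0 implies y_i = 0, and x_i = 1 implies y_i = 1. Then ‖g(y)‖₂ ≤ ‖g(x)‖₂ + L‖x − y‖₂. In particular, if ε > 0, ‖g(x)‖₂ ≤ ε/2 and ‖x − y‖₂ ≤ ε/(2L), then ‖g(y)‖₂ ≤ ε, i.e., y is an ε-KKT point of the minimization of f over [0,1]^d. -/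

import Mathlib

private lemma min0_lip (a b : ℝ) : |min 0 b - min 0 a| ≤ |a - b| := by
  rcases le_total a 0 with h1 | h1 <;> rcases le_total b 0 with h2 | h2 <;>
    simp [min_eq_left, min_eq_right, h1, h2, abs_sub_comm] <;>
    rcases abs_cases (a - b) with ⟨he, _⟩ | ⟨he, _⟩ <;>
    rcases abs_cases (b - a) with ⟨he2, _⟩ | ⟨he2, _⟩ <;>
    rw [abs_le] <;> constructor <;> linarith

private lemma max0_lip (a b : ℝ) : |max 0 b - max 0 a| ≤ |a - b| := by
  rcases le_total a 0 with h1 | h1 <;> rcases le_total b 0 with h2 | h2 <;>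
    simp [max_eq_left, max_eq_right, h1, h2, abs_sub_comm] <;>
    rcases abs_cases (a - b) with ⟨he, _⟩ | ⟨he, _⟩ <;>
    rcases abs_cases (b - a) with ⟨he2, _⟩ | ⟨he2, _⟩ <;>
    rw [abs_le] <;> constructor <;> linarith

private lemma abs_min0_le (b : ℝ) : |min 0 b| ≤ |b| := by
  rcases le_total b 0 with h | h <;> simp [min_eq_left, min_eq_right, h]

private lemma abs_max0_le (b : ℝ) : |max 0 b| ≤ |b| := by
  rcases le_total b 0 with h | h <;> simp [max_eq_left, max_eq_right, h, abs_of_nonpos]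

private lemma pg_key (a b : ℝ) :
    |min 0 b| ≤ |min 0 a| + |a - b| ∧ |max 0 b| ≤ |max 0 a| + |a - b| ∧
    |min 0 b| ≤ |a| + |a - b| ∧ |max 0 b| ≤ |a| + |a - b| ∧
    |b| ≤ |a| + |a - b| := by
  have h5 : |b| ≤ |a| + |a - b| := by
    have := abs_sub_abs_le_abs_sub b a
    rw [abs_sub_comm] at this; linarith
  refine ⟨?_, ?_, le_trans (abs_min0_le b) h5, le_trans (abs_max0_le b) h5, h5⟩
  · have := abs_sub_abs_le_abs_sub (min 0 b) (min 0 a)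
    have := min0_lip a b
    linarith
  · have := abs_sub_abs_le_abs_sub (max 0 b) (max 0 a)
    have := max0_lip a b
    linarith

private lemma euclid_norm_le {d : ℕ} (v u : EuclideanSpace ℝ (Fin d))
    (h : ∀ i, |v i| ≤ u i) : ‖v‖ ≤ ‖u‖ := by
  rw [EuclideanSpace.norm_eq, EuclideanSpace.norm_eq]
  apply Real.sqrt_le_sqrt
  apply Finset.sum_le_sum
  intro i _
  have h1 := h i
  have h0 : (0:ℝ) ≤ u i := le_trans (abs_nonneg _) h1
  have hv : ‖v i‖ = |v i| := rfl
  have hu2 : ‖u i‖ = |u i| := rfl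
  rw [hv, hu2, abs_of_nonneg h0]
  exact pow_le_pow_left₀ (abs_nonneg _) h1 2

private lemma euclid_norm_abs {d : ℕ} (v u : EuclideanSpace ℝ (Fin d))
    (h : ∀ i, u i = |v i|) : ‖u‖ = ‖v‖ := by
  rw [EuclideanSpace.norm_eq, EuclideanSpace.norm_eq]
  congr 1
  apply Finset.sum_congr rfl
  intro i _
  have hu : ‖u i‖ = |u i| := rfl
  have hv : ‖v i‖ = |v i| := rfl
  rw [hu, hv, h i, abs_abs]

/-- Stability of the projected gradient: if `f` is
continuously differentiable on a neighborhood of `[0,1]^d` with `L`-Lipschitz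
gradient there, `g` is its projected gradient, and `y` keeps every coordinate
of `x` that is clamped at `0` or `1` clamped the same way, then
`‖g(y)‖ ≤ ‖g(x)‖ + L‖x − y‖`; in particular if `‖g(x)‖ ≤ ε/2` and
`‖x − y‖ ≤ ε/(2L)` then `y` is an `ε`-KKT point. -/
theorem projected_gradient_stability
    (d : ℕ) (hd : 1 ≤ d) (L : ℝ) (hL : 0 < L)
    (f : EuclideanSpace ℝ (Fin d) → ℝ)
    (U : Set (EuclideanSpace ℝ (Fin d))) (hU : IsOpen U)
    (hcube : {x : EuclideanSpace ℝ (Fin d) | ∀ i, 0 ≤ x i ∧ x i ≤ 1} ⊆ U)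
    (hf : ContDiffOn ℝ 1 f U)
    (hgrad : ∀ x ∈ {x : EuclideanSpace ℝ (Fin d) | ∀ i, 0 ≤ x i ∧ x i ≤ 1},
      ∀ y ∈ {x : EuclideanSpace ℝ (Fin d) | ∀ i, 0 ≤ x i ∧ x i ≤ 1},
      ‖gradient f x - gradient f y‖ ≤ L * ‖x - y‖)
    (g : EuclideanSpace ℝ (Fin d) → EuclideanSpace ℝ (Fin d))
    (hg : ∀ x, ∀ i, g x i =
      if x i = 0 then min 0 (gradient f x i)
      else if x i = 1 then max 0 (gradient f x i)
      else gradient f x i)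
    (x y : EuclideanSpace ℝ (Fin d))
    (hx : ∀ i, 0 ≤ x i ∧ x i ≤ 1) (hy : ∀ i, 0 ≤ y i ∧ y i ≤ 1)
    (hxy : ∀ i, (x i = 0 → y i = 0) ∧ (x i = 1 → y i = 1)) :
    ‖g y‖ ≤ ‖g x‖ + L * ‖x - y‖ ∧
    (∀ ε : ℝ, 0 < ε → ‖g x‖ ≤ ε / 2 → ‖x - y‖ ≤ ε / (2 * L) → ‖g y‖ ≤ ε) := by
  set a := gradient f x with ha
  set b := gradient f y with hb
  have key : ∀ i, |g y i| ≤ |g x i| + |a i - b i| := by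
    intro i
    obtain ⟨h1, h2, h3, h4, h5⟩ := pg_key (a i) (b i)
    rw [hg x i, hg y i]
    rcases eq_or_ne (x i) 0 with hx0 | hx0
    · have hy0 := (hxy i).1 hx0
      rw [if_pos hx0, if_pos hy0]
      exact h1
    · rcases eq_or_ne (x i) 1 with hx1 | hx1
      · have hy1 := (hxy i).2 hx1
        have hy0 : y i ≠ 0 := by rw [hy1]; norm_num
        rw [if_neg hx0, if_pos hx1, if_neg hy0, if_pos hy1]
        exact h2
      · rw [if_neg hx0, if_neg hx1]
        rcases eq_or_ne (y i) 0 with hy0 | hy0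
        · rw [if_pos hy0]; exact h3
        · rcases eq_or_ne (y i) 1 with hy1 | hy1
          · rw [if_neg hy0, if_pos hy1]; exact h4
          · rw [if_neg hy0, if_neg hy1]; exact h5
  have main : ‖g y‖ ≤ ‖g x‖ + L * ‖x - y‖ := by
    set u : EuclideanSpace ℝ (Fin d) := WithLp.toLp 2 (fun i => |g x i|) with hu
    set w : EuclideanSpace ℝ (Fin d) := WithLp.toLp 2 (fun i => |(a - b) i|) with hw
    have hsub : ∀ i, (a - b) i = a i - b i := fun i => rfl
    have h1 : ‖g y‖ ≤ ‖u + w‖ := by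
      apply euclid_norm_le
      intro i
      have huw : (u + w) i = u i + w i := rfl
      rw [huw, hu, hw]
      simpa [hsub i] using key i
    have h2 : ‖u + w‖ ≤ ‖u‖ + ‖w‖ := norm_add_le u w
    have h3 : ‖u‖ = ‖g x‖ := euclid_norm_abs (g x) u (fun i => rfl)
    have h4 : ‖w‖ = ‖a - b‖ := euclid_norm_abs (a - b) w (fun i => rfl)
    have h5 : ‖a - b‖ ≤ L * ‖x - y‖ := hgrad x hx y hy
    calc ‖g y‖ ≤ ‖u + w‖ := h1
      _ ≤ ‖u‖ + ‖w‖ := h2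
      _ = ‖g x‖ + ‖a - b‖ := by rw [h3, h4]
      _ ≤ ‖g x‖ + L * ‖x - y‖ := by linarith
  refine ⟨main, fun ε hε hgx hxyn => ?_⟩
  have hmul : L * ‖x - y‖ ≤ L * (ε / (2 * L)) :=
    mul_le_mul_of_nonneg_left hxyn hL.le
  have hle : L * (ε / (2 * L)) = ε / 2 := by field_simp
  linarith [main]
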